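/- Let G be a topological group, N a normal clopen subgroup of G, and suppose each inner automorphism σ_t of G restricts to an automorphism of N inducing a homeomorphism \widehat{σ_t|_N} of Π(N) (via the universal property of Π(N)), such that for r ∈ N, \widehat{σ_r|_N}(z) = rz, and t ↦ \widehat{σ_t|_N} is a homomorphism. Then the map ζ : G × Π(N) → Π(N), ζ(t,z) = \widehat{σ_t|_N}(z), is jointly continuous; hence (G, Π(N), ζ) is a flow, and this flow is minimal and proximal. -/

import Mathlib

universe u v

def IsMinimalFlow (G X : Type*) [Group G] [TopologicalSpace X] [MulAction G X] : Prop :=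
  ∀ x : X, Dense (Set.range fun g : G => g • x)

def IsProximalFlow (G X : Type*) [Group G] [TopologicalSpace X] [MulAction G X] : Prop :=
  ∀ x y : X, ∃ z : X, (z, z) ∈ closure (Set.range fun g : G => (g • x, g • y))

theorem extended_action_continuous_minimal_proximal
    (G : Type u) (X : Type v) [Group G] [TopologicalSpace G] [IsTopologicalGroup G]
    (N : Subgroup G) [N.Normal] (hNo : IsOpen (N : Set G)) (hNc : IsClosed (N : Set G))
    -- X = Π(N) : the universal minimal proximal flow of N, with jointly continuous N-action
    [TopologicalSpace X] [CompactSpace X] [T2Space X]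
    [MulAction N X] [ContinuousSMul N X]
    (hmin : IsMinimalFlow N X) (hprox : IsProximalFlow N X)
    -- the assignment t ↦ σ̂_{t|N} of homeomorphisms of Π(N) to elements of G
    (F : G → X ≃ₜ X)
    -- t ↦ σ̂_{t|N} is a homomorphism
    (F_hom : ∀ s t : G, F (s * t) = (F t).trans (F s))
    -- for r ∈ N, σ̂_{r|N} is the action of r
    (F_mem : ∀ (r : N) (z : X), F (r : G) z = r • z)
    -- twisted equivariance: σ̂_{t|N}(n • z) = (t n t⁻¹) • σ̂_{t|N}(z)
    (F_tw : ∀ (t : G) (n : N) (z : X),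
      F t (n • z) = (⟨t * n * t⁻¹, Subgroup.Normal.conj_mem ‹N.Normal› n n.2 t⟩ : N) • F t z) :
    -- ζ is jointly continuous, and the resulting G-flow is minimal and proximal
    Continuous (fun p : G × X => F p.1 p.2) ∧
    (∀ z : X, Dense (Set.range fun t : G => F t z)) ∧
    (∀ z w : X, ∃ y : X, (y, y) ∈ closure (Set.range fun t : G => (F t z, F t w))) := by
  refine ⟨?_, ?_, ?_⟩
  · rw [continuous_iff_continuousAt]
    rintro ⟨t, z⟩
    have hU : IsOpen {p : G × X | t⁻¹ * p.1 ∈ N} := by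
      exact (hNo.preimage (continuous_const.mul continuous_fst))
    have hmem : {p : G × X | t⁻¹ * p.1 ∈ N} ∈ nhds (t, z) := by
      refine hU.mem_nhds ?_
      simp [N.one_mem]
    refine ContinuousOn.continuousAt ?_ hmem
    rw [continuousOn_iff_continuous_restrict]
    have key : ∀ q : {p : G × X | t⁻¹ * p.1 ∈ N},
        F q.1.1 q.1.2 = F t ((⟨t⁻¹ * q.1.1, q.2⟩ : N) • q.1.2) := by
      rintro ⟨⟨s, x⟩, hs⟩
      have : F (t * (t⁻¹ * s)) x = F t (F (t⁻¹ * s) x) := by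
        rw [F_hom]; rfl
      simp only [mul_inv_cancel_left] at this
      rw [this, F_mem ⟨t⁻¹ * s, hs⟩ x]
    have : Continuous fun q : {p : G × X | t⁻¹ * p.1 ∈ N} =>
        F t ((⟨t⁻¹ * q.1.1, q.2⟩ : N) • q.1.2) := by
      refine (F t).continuous.comp ?_
      refine continuous_smul.comp (Continuous.prodMk ?_ ?_)
      · exact Continuous.subtype_mk (continuous_const.mul (continuous_fst.comp continuous_subtype_val)) _
      · exact continuous_snd.comp continuous_subtype_val
    exact this.congr fun q => (key q).symm
  · intro z
    refine Dense.mono ?_ (hmin z)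
    rintro x ⟨r, rfl⟩
    exact ⟨(r : G), F_mem r z⟩
  · intro z w
    obtain ⟨y, hy⟩ := hprox z w
    refine ⟨y, closure_mono ?_ hy⟩
    rintro x ⟨r, rfl⟩
    exact ⟨(r : G), by simp [F_mem]⟩
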